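/- Let G = (V,E,ν,μ) be a locally finite weighted graph with M := sup_x deg_x/ν_x < ∞. Then for any p ∈ [1,∞) and any finitely supported f : V → ℝ, ‖Δf‖_{ℓ^p(V,ν)}^p ≤ 2 M^{p-1} ‖|Df|‖_{ℓ^p(E,μ)}^p, where Δf(x) = (1/ν_x) Σ_y μ_{xy}(f(x)-f(y)). -/

import Mathlib

open Finset Function Real

theorem laplacian_norm_le_edge_norm {V : Type*} (ν : V → ℝ) (μ : V → V → ℝ) (M : ℝ)
    (hν : ∀ x, 0 < ν x) (hsymm : ∀ x y, μ x y = μ y x) (hnn : ∀ x y, 0 ≤ μ x y)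
    (hloc : ∀ x, (Function.support (μ x)).Finite)
    (hM : ∀ x, (∑' y, μ x y) / ν x ≤ M) (hM0 : 0 ≤ M)
    (p : ℝ) (hp : 1 ≤ p)
    (f : V → ℝ) (hf : (Function.support f).Finite) :
    (∑' x, |(∑' y, μ x y * (f x - f y)) / ν x| ^ p * ν x)
      ≤ 2 * M ^ (p - 1) * ((1 / 2) * ∑' x, ∑' y, μ x y * |f x - f y| ^ p) := by
  have hp0 : (0:ℝ) < p := lt_of_lt_of_le one_pos hp
  have hp1 : (0:ℝ) ≤ p - 1 := by linarith
  set L : V → ℝ := fun x => |(∑' y, μ x y * (f x - f y)) / ν x| ^ p * ν x with hLdef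
  set R : V → ℝ := fun x => ∑' y, μ x y * |f x - f y| ^ p with hRdef
  have hS : (Function.support f ∪ ⋃ y ∈ Function.support f,
      Function.support (μ y)).Finite :=
    hf.union (Set.Finite.biUnion hf fun y _ => hloc y)
  set S : Finset V := hS.toFinset with hSdef
  -- inner tsums are finite sums
  have hT : ∀ x, (∑' y, μ x y * (f x - f y))
      = ∑ y ∈ (hloc x).toFinset, μ x y * (f x - f y) := by
    intro x
    refine tsum_eq_sum ?_
    intro y hy
    have : μ x y = 0 := by
      by_contra h
      exact hy ((hloc x).mem_toFinset.mpr h)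
    simp [this]
  have hR : ∀ x, R x = ∑ y ∈ (hloc x).toFinset, μ x y * |f x - f y| ^ p := by
    intro x
    refine tsum_eq_sum ?_
    intro y hy
    have : μ x y = 0 := by
      by_contra h
      exact hy ((hloc x).mem_toFinset.mpr h)
    simp [this]
  have hdeg : ∀ x, (∑' y, μ x y) = ∑ y ∈ (hloc x).toFinset, μ x y := by
    intro x
    refine tsum_eq_sum ?_
    intro y hy
    by_contra h
    exact hy ((hloc x).mem_toFinset.mpr h)
  -- vanishing outside S
  have hout : ∀ x ∉ S, f x = 0 ∧ ∀ y, f y ≠ 0 → μ x y = 0 := by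
    intro x hx
    rw [hSdef, Set.Finite.mem_toFinset, Set.mem_union] at hx
    push_neg at hx
    obtain ⟨hx1, hx2⟩ := hx
    refine ⟨Function.notMem_support.mp hx1, fun y hy => ?_⟩
    have : x ∉ Function.support (μ y) := by
      intro hmem
      exact hx2 (Set.mem_biUnion hy hmem)
    rw [hsymm]
    exact Function.notMem_support.mp this
  have hLS : ∀ x ∉ S, L x = 0 := by
    intro x hx
    obtain ⟨hfx, hμx⟩ := hout x hx
    have hz : (∑' y, μ x y * (f x - f y)) = 0 := by
      have : ∀ y, μ x y * (f x - f y) = 0 := by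
        intro y
        by_cases hy : f y = 0
        · rw [hfx, hy]; ring
        · rw [hμx y hy]; ring
      simp [this]
    simp only [hLdef, hz, zero_div, abs_zero]
    rw [Real.zero_rpow hp0.ne', zero_mul]
  have hRS : ∀ x ∉ S, R x = 0 := by
    intro x hx
    obtain ⟨hfx, hμx⟩ := hout x hx
    have : ∀ y, μ x y * |f x - f y| ^ p = 0 := by
      intro y
      by_cases hy : f y = 0
      · rw [hfx, hy, sub_zero, abs_zero, Real.zero_rpow hp0.ne', mul_zero]
      · rw [hμx y hy, zero_mul]
    simp [hRdef, this]
  -- pointwise estimate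
  have key : ∀ x, L x ≤ M ^ (p - 1) * R x := by
    intro x
    set s := (hloc x).toFinset with hsdef
    set b : V → ℝ := fun y => |f x - f y| with hbdef
    have hb0 : ∀ y, 0 ≤ b y := fun y => abs_nonneg _
    set W : ℝ := ∑ y ∈ s, μ x y with hWdef
    have hW0 : 0 ≤ W := Finset.sum_nonneg fun y _ => hnn x y
    have hQ0 : 0 ≤ ∑ y ∈ s, μ x y * b y ^ p :=
      Finset.sum_nonneg fun y _ => mul_nonneg (hnn x y) (Real.rpow_nonneg (hb0 y) p)
    have step1 : |∑ y ∈ s, μ x y * (f x - f y)| ≤ ∑ y ∈ s, μ x y * b y := by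
      refine (Finset.abs_sum_le_sum_abs _ _).trans_eq ?_
      refine Finset.sum_congr rfl fun y _ => ?_
      rw [abs_mul, abs_of_nonneg (hnn x y)]
    have hsb0 : 0 ≤ ∑ y ∈ s, μ x y * b y :=
      Finset.sum_nonneg fun y _ => mul_nonneg (hnn x y) (hb0 y)
    have step2 : ∑ y ∈ s, μ x y * b y
        ≤ W ^ (1 - p⁻¹) * (∑ y ∈ s, μ x y * b y ^ p) ^ p⁻¹ :=
      Real.inner_le_weight_mul_Lp_of_nonneg s hp _ _ (hnn x) hb0
    have step3 : (∑ y ∈ s, μ x y * b y) ^ p ≤ W ^ (p - 1) * ∑ y ∈ s, μ x y * b y ^ p := by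
      calc (∑ y ∈ s, μ x y * b y) ^ p
          ≤ (W ^ (1 - p⁻¹) * (∑ y ∈ s, μ x y * b y ^ p) ^ p⁻¹) ^ p :=
            Real.rpow_le_rpow hsb0 step2 hp0.le
        _ = W ^ (p - 1) * ∑ y ∈ s, μ x y * b y ^ p := by
            rw [Real.mul_rpow (Real.rpow_nonneg hW0 _) (Real.rpow_nonneg hQ0 _),
              ← Real.rpow_mul hW0, ← Real.rpow_mul hQ0]
            have h1 : (1 - p⁻¹) * p = p - 1 := by field_simp
            have h2 : p⁻¹ * p = 1 := inv_mul_cancel₀ hp0.ne'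
            rw [h1, h2, Real.rpow_one]
    have hWM : W ≤ M * ν x := by
      have h := hM x
      rw [hdeg x, ← hWdef, div_le_iff₀ (hν x)] at h
      exact h
    have hWpow : W ^ (p - 1) ≤ M ^ (p - 1) * ν x ^ (p - 1) := by
      calc W ^ (p - 1) ≤ (M * ν x) ^ (p - 1) := Real.rpow_le_rpow hW0 hWM hp1
        _ = M ^ (p - 1) * ν x ^ (p - 1) := Real.mul_rpow hM0 (hν x).le
    -- combine
    have hTabs : |∑' y, μ x y * (f x - f y)| ^ p
        ≤ M ^ (p - 1) * ν x ^ (p - 1) * ∑ y ∈ s, μ x y * b y ^ p := by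
      rw [hT x]
      calc |∑ y ∈ s, μ x y * (f x - f y)| ^ p
          ≤ (∑ y ∈ s, μ x y * b y) ^ p := Real.rpow_le_rpow (abs_nonneg _) step1 hp0.le
        _ ≤ W ^ (p - 1) * ∑ y ∈ s, μ x y * b y ^ p := step3
        _ ≤ M ^ (p - 1) * ν x ^ (p - 1) * ∑ y ∈ s, μ x y * b y ^ p := by
            exact mul_le_mul_of_nonneg_right hWpow hQ0
    have hLx : L x = |∑' y, μ x y * (f x - f y)| ^ p * (ν x ^ p)⁻¹ * ν x := by
      simp only [hLdef]
      rw [abs_div, abs_of_pos (hν x), Real.div_rpow (abs_nonneg _) (hν x).le]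
      ring
    rw [hLx, hR x, ← hsdef]
    have hνp : ν x ^ (p - 1) * (ν x ^ p)⁻¹ * ν x = 1 := by
      have e1 : (ν x ^ p)⁻¹ = ν x ^ (-p) := (Real.rpow_neg (hν x).le p).symm
      rw [e1, ← Real.rpow_add (hν x), show p - 1 + -p = -1 by ring,
        Real.rpow_neg_one, inv_mul_cancel₀ (hν x).ne']
    calc |∑' y, μ x y * (f x - f y)| ^ p * (ν x ^ p)⁻¹ * ν x
        ≤ (M ^ (p - 1) * ν x ^ (p - 1) * ∑ y ∈ s, μ x y * b y ^ p) * (ν x ^ p)⁻¹ * ν x := by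
          have h1 : 0 ≤ (ν x ^ p)⁻¹ := inv_nonneg.mpr (Real.rpow_nonneg (hν x).le p)
          exact mul_le_mul_of_nonneg_right (mul_le_mul_of_nonneg_right hTabs h1) (hν x).le
      _ = M ^ (p - 1) * (∑ y ∈ s, μ x y * b y ^ p)
            * (ν x ^ (p - 1) * (ν x ^ p)⁻¹ * ν x) := by ring
      _ = M ^ (p - 1) * ∑ y ∈ s, μ x y * b y ^ p := by rw [hνp]; ring
  -- assemble
  have hLsum : (∑' x, L x) = ∑ x ∈ S, L x := tsum_eq_sum hLS
  have hRsum : (∑' x, R x) = ∑ x ∈ S, R x := tsum_eq_sum hRS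
  calc (∑' x, L x) = ∑ x ∈ S, L x := hLsum
    _ ≤ ∑ x ∈ S, M ^ (p - 1) * R x := Finset.sum_le_sum fun x _ => key x
    _ = M ^ (p - 1) * ∑ x ∈ S, R x := by rw [Finset.mul_sum]
    _ = 2 * M ^ (p - 1) * ((1 / 2) * ∑' x, R x) := by rw [hRsum]; ring
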